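/- H_{k,q}^+ is contained in the kernel of d̆_q, and H_{k,q}^− is contained in the kernel of d̆*_{q−1}: every element of H_{k,q} that is symmetric in some k+1 of its components (and skew-symmetric in the rest) is annihilated by the skew-symmetrization operator d̆_q, and every element of H_{k,q} that is skew-symmetric in some q+1 of its components (and symmetric in the rest) is annihilated by the symmetrization operator d̆*_{q−1}. -/

import Mathlib

open scoped BigOperators

noncomputable section

variable (F : Type*) [Field F] [CharZero F] (H : Type*) [AddCommGroup H] [Module F H]

/-- The `n`-th tensor power of `H` over `F`. -/
abbrev TP (n : ℕ) : Type _ := PiTensorProduct F (fun _ : Fin n => H)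

/-- The action of a permutation `σ ∈ S_n` on the `n`-th tensor power,
permuting the tensor factors. -/
def permMap (n : ℕ) (σ : Equiv.Perm (Fin n)) : TP F H n →ₗ[F] TP F H n :=
  (PiTensorProduct.reindex F (fun _ : Fin n => H) σ).toLinearMap

/-- Identification of tensor powers of equal degrees. -/
def tpCast {m m' : ℕ} (hm : m = m') : TP F H m →ₗ[F] TP F H m' :=
  (PiTensorProduct.reindex F (fun _ : Fin m => H) (finCongr hm)).toLinearMap

/-- The permutations of `{1, …, n}` moving only positions in `a`. -/
def permsOn (n : ℕ) (a : Finset (Fin n)) : Finset (Equiv.Perm (Fin n)) :=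
  Finset.univ.filter fun σ => ∀ i, i ∉ a → σ i = i

/-- `S_a`: symmetrisation over the positions in `a` (the average over all
permutations of the positions in `a`, fixing the other positions). -/
def symOn (n : ℕ) (a : Finset (Fin n)) : TP F H n →ₗ[F] TP F H n :=
  (a.card.factorial : F)⁻¹ • ∑ σ ∈ permsOn n a, permMap F H n σ

/-- `A_a`: skew-symmetrisation over the positions in `a` (the signed average over
all permutations of the positions in `a`, fixing the other positions). -/
def altOn (n : ℕ) (a : Finset (Fin n)) : TP F H n →ₗ[F] TP F H n :=
  (a.card.factorial : F)⁻¹ • ∑ σ ∈ permsOn n a, (Equiv.Perm.sign σ : ℤ) • permMap F H n σ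

/-- The first `k` positions of `{1, …, n}`. -/
def firstSet (n k : ℕ) : Finset (Fin n) := Finset.univ.filter fun i => (i : ℕ) < k

/-- The last `m` positions of `{1, …, n}`. -/
def lastSet (n m : ℕ) : Finset (Fin n) := Finset.univ.filter fun i => n - m ≤ (i : ℕ)

/-- `H^{⊙a,∧aᶜ}`: the image of `S_a ∘ A_{aᶜ}`, the subspace of `n`-tensors symmetric in
the positions of `a` and skew-symmetric in the positions of `aᶜ`. -/
def Hgen (n : ℕ) (a : Finset (Fin n)) : Submodule F (TP F H n) :=
  LinearMap.range (symOn F H n a ∘ₗ altOn F H n aᶜ)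

/-- `H_{k,n-k} = H^{⊙k} ⊗ H^{∧(n-k)}`: the subspace of `n`-tensors symmetric in the
first `k` positions and skew-symmetric in the remaining positions. -/
def Hmix (n k : ℕ) : Submodule F (TP F H n) := Hgen F H n (firstSet n k)

/-- `H^{⊙[k],∧[n-k]}`: the span of the subspaces `H^{⊙a,∧aᶜ}` over all `k`-element
subsets `a ⊆ {1, …, n}`. -/
def HmixSpan (n k : ℕ) : Submodule F (TP F H n) :=
  ⨆ a ∈ {a : Finset (Fin n) | a.card = k}, Hgen F H n a

/-- The global operator whose restriction to `H_{k,q}` (with `m = q + 1`, `n = k + q`)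
is `d̆_q`: skew-symmetrisation of the last `m` positions, scaled by `m`. -/
def dOp (n m : ℕ) : TP F H n →ₗ[F] TP F H n := (m : F) • altOn F H n (lastSet n m)

/-- The global operator whose restriction to `H_{k-1,q+1}` (with `m = k`, `n = k + q`)
is `d̆*_q`: symmetrisation of the first `m` positions, scaled by `m`. -/
def dStarOp (n m : ℕ) : TP F H n →ₗ[F] TP F H n := (m : F) • symOn F H n (firstSet n m)

/-- The elementary element `h₁⊙…⊙h_k ⊗ x₁∧…∧x_q` of `H_{k,q} ⊆ H^{⊗(k+q)}`. -/
def elem (k q : ℕ) (h : Fin k → H) (x : Fin q → H) : TP F H (k + q) :=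
  ∑ ρ : Equiv.Perm (Fin k), ∑ τ : Equiv.Perm (Fin q),
    (Equiv.Perm.sign τ : ℤ) •
      (PiTensorProduct.tprod F (Fin.append (h ∘ ρ) (x ∘ τ)) : TP F H (k + q))


section AuxLemmas

set_option linter.unusedSectionVars false

lemma mem_permsOn {n : ℕ} {a : Finset (Fin n)} {σ : Equiv.Perm (Fin n)} :
    σ ∈ permsOn n a ↔ ∀ i, i ∉ a → σ i = i := by simp [permsOn]

lemma permsOn_mul {n : ℕ} {a : Finset (Fin n)} {σ π : Equiv.Perm (Fin n)}
    (hσ : σ ∈ permsOn n a) (hπ : π ∈ permsOn n a) : σ * π ∈ permsOn n a := by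
  rw [mem_permsOn] at *
  intro i hi
  simp [Equiv.Perm.mul_apply, hπ i hi, hσ i hi]

lemma permsOn_inv {n : ℕ} {a : Finset (Fin n)} {σ : Equiv.Perm (Fin n)}
    (hσ : σ ∈ permsOn n a) : σ⁻¹ ∈ permsOn n a := by
  rw [mem_permsOn] at *
  intro i hi
  conv_lhs => rw [← hσ i hi]
  simp

lemma permsOn_mapsTo {n : ℕ} {a : Finset (Fin n)} {σ : Equiv.Perm (Fin n)}
    (hσ : σ ∈ permsOn n a) {i : Fin n} (hi : i ∈ a) : σ i ∈ a := by
  by_contra h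
  have h1 : σ (σ i) = σ i := mem_permsOn.mp hσ _ h
  have h2 := σ.injective h1
  rw [h2] at h
  exact h hi

lemma sum_permsOn_mul_right {M : Type*} [AddCommMonoid M] {n : ℕ} {a : Finset (Fin n)}
    {π : Equiv.Perm (Fin n)} (hπ : π ∈ permsOn n a) (f : Equiv.Perm (Fin n) → M) :
    ∑ σ ∈ permsOn n a, f (σ * π) = ∑ σ ∈ permsOn n a, f σ := by
  apply Finset.sum_nbij' (fun σ => σ * π) (fun σ => σ * π⁻¹)
  · intro σ hσ; exact permsOn_mul hσ hπ
  · intro σ hσ; exact permsOn_mul hσ (permsOn_inv hπ)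
  · intro σ hσ; simp [mul_assoc]
  · intro σ hσ; simp [mul_assoc]
  · intro σ hσ; rfl

lemma sum_permsOn_mul_left {M : Type*} [AddCommMonoid M] {n : ℕ} {a : Finset (Fin n)}
    {π : Equiv.Perm (Fin n)} (hπ : π ∈ permsOn n a) (f : Equiv.Perm (Fin n) → M) :
    ∑ σ ∈ permsOn n a, f (π * σ) = ∑ σ ∈ permsOn n a, f σ := by
  apply Finset.sum_nbij' (fun σ => π * σ) (fun σ => π⁻¹ * σ)
  · intro σ hσ; exact permsOn_mul hπ hσ
  · intro σ hσ; exact permsOn_mul (permsOn_inv hπ) hσ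
  · intro σ hσ; simp [← mul_assoc]
  · intro σ hσ; simp [← mul_assoc]
  · intro σ hσ; rfl

lemma permMap_permMap {n : ℕ} (π σ : Equiv.Perm (Fin n)) (x : TP F H n) :
    permMap F H n π (permMap F H n σ x) = permMap F H n (π * σ) x :=
  PiTensorProduct.reindex_reindex σ π x

lemma symOn_apply {n : ℕ} (a : Finset (Fin n)) (x : TP F H n) :
    symOn F H n a x = (a.card.factorial : F)⁻¹ • ∑ σ ∈ permsOn n a, permMap F H n σ x := by
  simp [symOn, LinearMap.sum_apply]

lemma altOn_apply {n : ℕ} (a : Finset (Fin n)) (x : TP F H n) :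
    altOn F H n a x
      = (a.card.factorial : F)⁻¹ •
          ∑ σ ∈ permsOn n a, ((Equiv.Perm.sign σ : ℤ) : F) • permMap F H n σ x := by
  simp only [altOn, LinearMap.smul_apply, LinearMap.sum_apply, LinearMap.smul_apply,
    Int.cast_smul_eq_zsmul]
  rfl

lemma permMap_symOn {n : ℕ} {a : Finset (Fin n)} {π : Equiv.Perm (Fin n)}
    (hπ : π ∈ permsOn n a) (x : TP F H n) :
    permMap F H n π (symOn F H n a x) = symOn F H n a x := by
  rw [symOn_apply, map_smul, map_sum]
  congr 1
  calc ∑ σ ∈ permsOn n a, permMap F H n π (permMap F H n σ x)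
      = ∑ σ ∈ permsOn n a, (fun σ' => permMap F H n σ' x) (π * σ) :=
        Finset.sum_congr rfl fun σ _ => permMap_permMap F H π σ x
    _ = _ := sum_permsOn_mul_left hπ (fun σ' => permMap F H n σ' x)

lemma symOn_permMap {n : ℕ} {a : Finset (Fin n)} {π : Equiv.Perm (Fin n)}
    (hπ : π ∈ permsOn n a) (x : TP F H n) :
    symOn F H n a (permMap F H n π x) = symOn F H n a x := by
  rw [symOn_apply, symOn_apply]
  congr 1
  calc ∑ σ ∈ permsOn n a, permMap F H n σ (permMap F H n π x)
      = ∑ σ ∈ permsOn n a, (fun σ' => permMap F H n σ' x) (σ * π) :=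
        Finset.sum_congr rfl fun σ _ => permMap_permMap F H σ π x
    _ = _ := sum_permsOn_mul_right hπ (fun σ' => permMap F H n σ' x)

lemma altOn_permMap {n : ℕ} {a : Finset (Fin n)} {π : Equiv.Perm (Fin n)}
    (hπ : π ∈ permsOn n a) (x : TP F H n) :
    altOn F H n a (permMap F H n π x)
      = ((Equiv.Perm.sign π : ℤ) : F) • altOn F H n a x := by
  rw [altOn_apply, altOn_apply]
  conv_rhs => rw [smul_comm, Finset.smul_sum]
  congr 1
  calc ∑ σ ∈ permsOn n a, ((Equiv.Perm.sign σ : ℤ) : F) • permMap F H n σ (permMap F H n π x)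
      = ∑ σ ∈ permsOn n a,
          (fun σ' => ((Equiv.Perm.sign (σ' * π⁻¹) : ℤ) : F) • permMap F H n σ' x) (σ * π) := by
        refine Finset.sum_congr rfl fun σ _ => ?_
        simp only [mul_inv_cancel_right]
        rw [permMap_permMap]
    _ = ∑ σ ∈ permsOn n a, ((Equiv.Perm.sign (σ * π⁻¹) : ℤ) : F) • permMap F H n σ x :=
        sum_permsOn_mul_right hπ
          (fun σ' => ((Equiv.Perm.sign (σ' * π⁻¹) : ℤ) : F) • permMap F H n σ' x)
    _ = _ := by
        refine Finset.sum_congr rfl fun σ _ => ?_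
        rw [smul_smul]
        congr 1
        push_cast [map_mul, Equiv.Perm.sign_inv]
        ring

lemma permMap_altOn {n : ℕ} {a : Finset (Fin n)} {π : Equiv.Perm (Fin n)}
    (hπ : π ∈ permsOn n a) (x : TP F H n) :
    permMap F H n π (altOn F H n a x)
      = ((Equiv.Perm.sign π : ℤ) : F) • altOn F H n a x := by
  rw [altOn_apply, map_smul, map_sum]
  conv_rhs => rw [smul_comm, Finset.smul_sum]
  congr 1
  calc ∑ σ ∈ permsOn n a, permMap F H n π (((Equiv.Perm.sign σ : ℤ) : F) • permMap F H n σ x)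
      = ∑ σ ∈ permsOn n a,
          (fun σ' => ((Equiv.Perm.sign (π⁻¹ * σ') : ℤ) : F) • permMap F H n σ' x) (π * σ) := by
        refine Finset.sum_congr rfl fun σ _ => ?_
        simp only [inv_mul_cancel_left]
        rw [map_smul, permMap_permMap]
    _ = ∑ σ ∈ permsOn n a, ((Equiv.Perm.sign (π⁻¹ * σ) : ℤ) : F) • permMap F H n σ x :=
        sum_permsOn_mul_left hπ
          (fun σ' => ((Equiv.Perm.sign (π⁻¹ * σ') : ℤ) : F) • permMap F H n σ' x)
    _ = _ := by
        refine Finset.sum_congr rfl fun σ _ => ?_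
        rw [smul_smul]
        congr 1
        push_cast [map_mul, Equiv.Perm.sign_inv]
        ring

lemma permsOn_commute {n : ℕ} {a : Finset (Fin n)} {σ π : Equiv.Perm (Fin n)}
    (hσ : σ ∈ permsOn n a) (hπ : π ∈ permsOn n aᶜ) : π * σ = σ * π := by
  ext i
  by_cases hi : i ∈ a
  · have h1 : π i = i := mem_permsOn.mp hπ i (by simp [hi])
    have h2 : π (σ i) = σ i := mem_permsOn.mp hπ _ (by simp [permsOn_mapsTo hσ hi])
    simp [Equiv.Perm.mul_apply, h1, h2]
  · have h1 : σ i = i := mem_permsOn.mp hσ i hi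
    have h3 : π i ∈ aᶜ := permsOn_mapsTo hπ (by simpa using hi)
    have h2 : σ (π i) = π i := mem_permsOn.mp hσ _ (by simpa using h3)
    simp [Equiv.Perm.mul_apply, h1, h2]

lemma permMap_symOn_comm {n : ℕ} {a : Finset (Fin n)} {π : Equiv.Perm (Fin n)}
    (hπ : π ∈ permsOn n aᶜ) (x : TP F H n) :
    permMap F H n π (symOn F H n a x) = symOn F H n a (permMap F H n π x) := by
  rw [symOn_apply, map_smul, map_sum, symOn_apply]
  congr 1
  refine Finset.sum_congr rfl fun σ hσ => ?_
  rw [permMap_permMap, permMap_permMap, permsOn_commute hσ hπ]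

lemma card_firstSet {n m : ℕ} (h : m ≤ n) : (firstSet n m).card = m := by
  have key : (firstSet n m).map Fin.valEmbedding = Finset.Iio m := by
    ext j
    simp only [Finset.mem_map, Finset.mem_Iio, firstSet, Finset.mem_filter, Finset.mem_univ,
      true_and, Fin.valEmbedding_apply]
    constructor
    · rintro ⟨i, hi, rfl⟩; exact hi
    · intro hj; exact ⟨⟨j, lt_of_lt_of_le hj h⟩, hj, rfl⟩
  have := congrArg Finset.card key
  rwa [Finset.card_map, Nat.card_Iio] at this

lemma lastSet_eq_compl (n m : ℕ) : lastSet n m = (firstSet n (n - m))ᶜ := by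
  ext i
  simp [lastSet, firstSet, Finset.mem_compl, not_lt]

lemma card_lastSet {n m : ℕ} (h : m ≤ n) : (lastSet n m).card = m := by
  rw [lastSet_eq_compl, Finset.card_compl, card_firstSet (Nat.sub_le n m), Fintype.card_fin,
    Nat.sub_sub_self h]

lemma exists_pair {n : ℕ} {a b : Finset (Fin n)} (h : n + 2 ≤ a.card + b.card) :
    ∃ i ∈ a ∩ b, ∃ j ∈ a ∩ b, i ≠ j := by
  have hu : (a ∪ b).card ≤ n := by
    simpa [Fintype.card_fin] using Finset.card_le_univ (a ∪ b)
  have hcard : 2 ≤ (a ∩ b).card := by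
    have := Finset.card_inter_add_card_union a b
    omega
  exact Finset.one_lt_card.mp hcard

lemma swap_mem_permsOn {n : ℕ} {a : Finset (Fin n)} {i j : Fin n}
    (hi : i ∈ a) (hj : j ∈ a) : Equiv.swap i j ∈ permsOn n a := by
  rw [mem_permsOn]
  intro l hl
  exact Equiv.swap_apply_of_ne_of_ne (fun h => hl (h ▸ hi)) (fun h => hl (h ▸ hj))

lemma eq_zero_of_eq_neg {V : Type*} [AddCommGroup V] [Module F V] {v : V} (h : v = -v) :
    v = 0 := by
  have h4 : v + v = 0 := add_eq_zero_iff_eq_neg.mpr h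
  have h5 : (2 : F) • v = 0 := by rw [two_smul]; exact h4
  exact (smul_eq_zero.mp h5).resolve_left two_ne_zero

lemma altOn_kill {n : ℕ} {a L : Finset (Fin n)} (hcard : n + 2 ≤ a.card + L.card)
    (y : TP F H n) :
    altOn F H n L (symOn F H n a (altOn F H n aᶜ y)) = 0 := by
  obtain ⟨i, hi, j, hj, hij⟩ := exists_pair hcard
  rw [Finset.mem_inter] at hi hj
  set x := symOn F H n a (altOn F H n aᶜ y) with hx
  have hπa : Equiv.swap i j ∈ permsOn n a := swap_mem_permsOn hi.1 hj.1
  have hπL : Equiv.swap i j ∈ permsOn n L := swap_mem_permsOn hi.2 hj.2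
  have h1 : permMap F H n (Equiv.swap i j) x = x := permMap_symOn F H hπa _
  have h3 : altOn F H n L x = - altOn F H n L x := by
    conv_lhs => rw [← h1, altOn_permMap F H hπL, Equiv.Perm.sign_swap hij]
    simp
  exact eq_zero_of_eq_neg F h3

lemma symOn_kill {n : ℕ} {a Fs : Finset (Fin n)} (hcard : n + 2 ≤ aᶜ.card + Fs.card)
    (y : TP F H n) :
    symOn F H n Fs (symOn F H n a (altOn F H n aᶜ y)) = 0 := by
  obtain ⟨i, hi, j, hj, hij⟩ := exists_pair hcard
  rw [Finset.mem_inter] at hi hj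
  set x := symOn F H n a (altOn F H n aᶜ y) with hx
  have hπc : Equiv.swap i j ∈ permsOn n aᶜ := swap_mem_permsOn hi.1 hj.1
  have hπF : Equiv.swap i j ∈ permsOn n Fs := swap_mem_permsOn hi.2 hj.2
  have h1 : permMap F H n (Equiv.swap i j) x = -x := by
    rw [hx, permMap_symOn_comm F H hπc, permMap_altOn F H hπc, Equiv.Perm.sign_swap hij,
      map_smul]
    simp
  have h3 : symOn F H n Fs x = - symOn F H n Fs x := by
    conv_lhs => rw [← symOn_permMap F H hπF x, h1, map_neg]
  exact eq_zero_of_eq_neg F h3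

end AuxLemmas

/-- `H_{k,q}^+ ⊆ ker(d̆_q)` and `H_{k,q}^- ⊆ ker(d̆*_{q-1})`: every element
of `H_{k,q}` symmetric in some `k+1` components (skew-symmetric in the rest) is annihilated
by `d̆_q = (q+1)·(id ⊗ A_{{k,…,n}})`, and every element of `H_{k,q}` skew-symmetric in some
`q+1` components (symmetric in the rest) is annihilated by
`d̆*_{q-1} = (k+1)·(S_{{1,…,k+1}} ⊗ id)`. -/
theorem plus_le_ker_dOp_and_minus_le_ker_dStarOp (k q : ℕ) (hk : 1 ≤ k) (hq : 1 ≤ q) :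
    Hmix F H (k + q) k ⊓ HmixSpan F H (k + q) (k + 1) ≤
      LinearMap.ker (dOp F H (k + q) (q + 1)) ∧
    Hmix F H (k + q) k ⊓ HmixSpan F H (k + q) (k - 1) ≤
      LinearMap.ker (dStarOp F H (k + q) (k + 1)) := by
  constructor
  · refine le_trans inf_le_right (iSup₂_le fun a ha => ?_)
    intro x hx
    obtain ⟨y, rfl⟩ := hx
    rw [LinearMap.mem_ker]
    have hcard : (k + q) + 2 ≤ a.card + (lastSet (k + q) (q + 1)).card := by
      rw [ha, card_lastSet (by omega)]
      omega
    simp only [dOp, LinearMap.smul_apply, LinearMap.coe_comp, Function.comp_apply]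
    rw [altOn_kill F H hcard y, smul_zero]
  · refine le_trans inf_le_right (iSup₂_le fun a ha => ?_)
    intro x hx
    obtain ⟨y, rfl⟩ := hx
    rw [LinearMap.mem_ker]
    have hac : aᶜ.card = q + 1 := by
      rw [Finset.card_compl, Fintype.card_fin, ha]
      omega
    have hcard : (k + q) + 2 ≤ aᶜ.card + (firstSet (k + q) (k + 1)).card := by
      rw [hac, card_firstSet (by omega)]
      omega
    simp only [dStarOp, LinearMap.smul_apply, LinearMap.coe_comp, Function.comp_apply]
    rw [symOn_kill F H hcard y, smul_zero]


end
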